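/- Let p ∈ [1,∞). For every ρ > 2^{−1/p} there exist m ∈ ℕ and constant sequences y^{−m},…,y^{m} ∈ ℓ^∞ (namely (y^k)_j = λ_k for all j, where λ_k = k·2^{−1/p}/m) such that every x ∈ ℓ^p with ‖x‖_{ℓ^p} ≤ 1 satisfies ‖x − y^k‖_{ℓ^∞} < ρ for some k ∈ {−m,…,m}. Consequently, the ball measure of non-compactness of the identity embedding I : ℓ^p → ℓ^∞ is at most 2^{−1/p} < 1 = ‖I‖, so I is not maximally non-compact. -/

import Mathlib

open scoped ENNReal NNReal

/-- The `ℓ^p` (quasi)norm of a real sequence, `(∑_j |x_j|^p)^{1/p}`, valued in `ℝ≥0∞`. -/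
noncomputable def seqLpNorm (p : ℝ) (x : ℕ → ℝ) : ℝ≥0∞ :=
  (∑' j, (‖x j‖₊ : ℝ≥0∞) ^ p) ^ (1 / p)

/-- The `ℓ^∞` norm of a real sequence, `sup_j |x_j|`, valued in `ℝ≥0∞`. -/
noncomputable def seqSupNorm (x : ℕ → ℝ) : ℝ≥0∞ :=
  ⨆ j, (‖x j‖₊ : ℝ≥0∞)

/-- For `p ∈ [1,∞)` and every `ρ > 2^{−1/p}` there is an `m ∈ ℕ`, `m > 0`,
such that the constant sequences `y^k` with value `λ_k = k·2^{−1/p}/m`, `k = −m,…,m`,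
have the property that every `x ∈ ℓ^p` with `‖x‖_{ℓ^p} ≤ 1` satisfies
`‖x − y^k‖_{ℓ^∞} < ρ` for some `k`. Consequently the ball measure of non-compactness of
`I : ℓ^p → ℓ^∞` is at most `2^{−1/p} < 1 = ‖I‖`, so `I` is not maximally non-compact. -/
theorem lp_into_linfty_covering (p : ℝ) (hp : 1 ≤ p)
    (ρ : ℝ) (hρ : (2 : ℝ) ^ (-(1 / p)) < ρ) :
    ∃ m : ℕ, 0 < m ∧
      ∀ x : ℕ → ℝ, seqLpNorm p x ≤ 1 →
        ∃ k : ℤ, |k| ≤ (m : ℤ) ∧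
          seqSupNorm (fun j => x j - (k : ℝ) * (2 : ℝ) ^ (-(1 / p)) / (m : ℝ))
            < ENNReal.ofReal ρ := by
  have hp0 : (0:ℝ) < p := lt_of_lt_of_le one_pos hp
  set lam : ℝ := (2 : ℝ) ^ (-(1 / p)) with hlamdef
  have hlam_pos : 0 < lam := Real.rpow_pos_of_pos two_pos _
  have hlam_half : (1/2 : ℝ) ≤ lam := by
    have h1 : -(1:ℝ) ≤ -(1/p) := by
      have : 1/p ≤ 1 := by
        rw [div_le_one hp0]; exact hp
      linarith
    have h2 := Real.rpow_le_rpow_of_exponent_le one_le_two h1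
    rw [Real.rpow_neg_one] at h2
    rw [hlamdef]
    linarith
  -- choose m
  obtain ⟨m, hm⟩ := exists_nat_gt (lam / (ρ - lam))
  have hρlam : 0 < ρ - lam := by linarith
  have hmpos : 0 < m := by
    by_contra h
    push_neg at h
    interval_cases m
    simp at hm
    nlinarith [div_pos hlam_pos hρlam]
  have hmR : (0:ℝ) < m := Nat.cast_pos.mpr hmpos
  have hstep : lam / m < ρ - lam := by
    rw [div_lt_iff₀ hmR, mul_comm]
    exact (div_lt_iff₀ hρlam).mp hm
  refine ⟨m, hmpos, ?_⟩
  intro x hx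
  -- sum bound
  have hsum : ∑' j, (‖x j‖₊ : ℝ≥0∞) ^ p ≤ 1 := by
    rw [seqLpNorm] at hx
    have h := ENNReal.rpow_le_rpow hx hp0.le
    rw [ENNReal.one_rpow] at h
    rw [← ENNReal.rpow_mul, one_div, inv_mul_cancel₀ hp0.ne', ENNReal.rpow_one] at h
    exact h
  have hterm : ∀ j, (‖x j‖₊ : ℝ≥0∞) ^ p ≤ 1 := fun j => le_trans (ENNReal.le_tsum j) hsum
  have habs1 : ∀ j, |x j| ≤ 1 := by
    intro j
    have h := hterm j
    rw [show (1:ℝ≥0∞) = 1 ^ p by rw [ENNReal.one_rpow]] at h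
    rw [ENNReal.rpow_le_rpow_iff hp0] at h
    have : ‖x j‖₊ ≤ 1 := by exact_mod_cast h
    rw [← Real.norm_eq_abs, ← coe_nnnorm]; exact_mod_cast this
  -- pairwise bound
  have hpair : ∀ j j', x j - x j' ≤ 2 * lam := by
    intro j j'
    rcases eq_or_ne j j' with rfl | hne
    · simp; positivity
    have hsum2 : (‖x j‖₊ : ℝ≥0∞) ^ p + (‖x j'‖₊ : ℝ≥0∞) ^ p ≤ 1 := by
      have := ENNReal.sum_le_tsum (f := fun i => (‖x i‖₊ : ℝ≥0∞) ^ p) {j, j'}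
      rw [Finset.sum_pair hne] at this
      exact this.trans hsum
    have hnn : (‖x j‖₊ : ℝ≥0) ^ p + (‖x j'‖₊ : ℝ≥0) ^ p ≤ 1 := by
      rw [← ENNReal.coe_le_coe, ENNReal.coe_add, ENNReal.coe_one,
        ENNReal.coe_rpow_of_nonneg _ hp0.le, ENNReal.coe_rpow_of_nonneg _ hp0.le]
      exact hsum2
    set a := ‖x j‖₊
    set b := ‖x j'‖₊
    have hconv : ((1/2 : ℝ≥0) * a + (1/2 : ℝ≥0) * b) ^ p ≤ (1/2 : ℝ≥0) * a ^ p + (1/2 : ℝ≥0) * b ^ p :=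
      NNReal.rpow_arith_mean_le_arith_mean2_rpow _ _ _ _ (add_halves 1) hp
    have hhalf : (1/2 : ℝ≥0) * a ^ p + (1/2 : ℝ≥0) * b ^ p ≤ (1/2 : ℝ≥0) := by
      rw [← mul_add]
      calc (1/2 : ℝ≥0) * (a ^ p + b ^ p) ≤ (1/2 : ℝ≥0) * 1 := by
            exact mul_le_mul_of_nonneg_left hnn zero_le
      _ = 1/2 := mul_one _
    have hlamNN : ((2 : ℝ≥0) ^ (-(1/p))) ^ p = (1/2 : ℝ≥0) := by
      rw [← NNReal.rpow_mul]
      have : -(1/p) * p = -1 := by field_simp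
      rw [this, NNReal.rpow_neg_one]
      norm_num
    have key : (1/2 : ℝ≥0) * a + (1/2 : ℝ≥0) * b ≤ (2 : ℝ≥0) ^ (-(1/p)) := by
      rw [← NNReal.rpow_le_rpow_iff hp0, hlamNN]
      exact hconv.trans hhalf
    have keyR : (1/2 : ℝ) * |x j| + (1/2 : ℝ) * |x j'| ≤ lam := by
      have h3 := NNReal.coe_le_coe.mpr key
      have h4 : (((2 : ℝ≥0) ^ (-(1/p)) : ℝ≥0) : ℝ) = lam := by
        rw [NNReal.coe_rpow, hlamdef]; norm_num
      rw [h4] at h3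
      have h5 : ((((1/2 : ℝ≥0) * a + (1/2 : ℝ≥0) * b : ℝ≥0)) : ℝ)
          = (1/2 : ℝ) * |x j| + (1/2 : ℝ) * |x j'| := by
        push_cast [a, b, coe_nnnorm, Real.norm_eq_abs]
        ring
      rw [h5] at h3
      exact h3
    linarith [le_abs_self (x j), neg_abs_le (x j')]
  -- sup and inf
  have hbdd : BddAbove (Set.range x) := ⟨1, by rintro _ ⟨j, rfl⟩; exact (abs_le.mp (habs1 j)).2⟩
  have hbddb : BddBelow (Set.range x) := ⟨-1, by rintro _ ⟨j, rfl⟩; exact (abs_le.mp (habs1 j)).1⟩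
  set M := ⨆ j, x j with hM
  set mm := ⨅ j, x j with hmm
  have hxM : ∀ j, x j ≤ M := fun j => le_ciSup hbdd j
  have hmx : ∀ j, mm ≤ x j := fun j => ciInf_le hbddb j
  have hM1 : M ≤ 1 := ciSup_le fun j => (abs_le.mp (habs1 j)).2
  have hmm1 : -1 ≤ mm := le_ciInf fun j => (abs_le.mp (habs1 j)).1
  have hMm : M ≤ mm + 2 * lam := by
    apply ciSup_le
    intro j
    have : x j - 2 * lam ≤ mm := le_ciInf fun j' => by linarith [hpair j j']
    linarith
  have hmM : mm ≤ M := le_trans (hmx 0) (hxM 0)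
  -- t0
  set c := (M + mm) / 2 with hc
  set t0 := max (-lam) (min lam c) with ht0
  have ht0u : t0 ≤ lam := max_le (by linarith) (min_le_left _ _)
  have ht0l : -lam ≤ t0 := le_max_left _ _
  have hclose : ∀ j, |x j - t0| ≤ lam := by
    intro j
    rw [abs_sub_le_iff]
    rcases le_or_gt c (-lam) with h | h
    · have ht0e : t0 = -lam := by
        rw [ht0, min_eq_right (by linarith), max_eq_left h]
      rw [ht0e]
      constructor
      · -- x j ≤ -lam + lam = 0
        have : M + mm ≤ -2*lam := by rw [hc] at h; linarith
        have : M ≤ -2*lam - mm := by linarith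
        have : x j ≤ 1 - 2*lam := by linarith [hxM j, hmm1]
        linarith
      · linarith [habs1 j, (abs_le.mp (habs1 j)).1]
    rcases le_or_gt lam c with h2 | h2
    · have ht0e : t0 = lam := by
        rw [ht0, min_eq_left h2, max_eq_right (by linarith)]
      rw [ht0e]
      constructor
      · linarith [(abs_le.mp (habs1 j)).2]
      · have : 2*lam ≤ M + mm := by rw [hc] at h2; linarith
        have : -2*lam + 1 ≥ -mm := by linarith [hM1]
        have : lam - x j ≤ lam - mm := by linarith [hmx j]
        linarith
    · have ht0e : t0 = c := by
        rw [ht0, min_eq_right h2.le, max_eq_right h.le]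
      rw [ht0e, hc]
      constructor
      · have : M - mm ≤ 2 * lam := by linarith [hMm]
        linarith [hxM j]
      · have : M - mm ≤ 2 * lam := by linarith [hMm]
        linarith [hmx j]
  -- choose k
  set z := t0 * m / lam with hz
  have hzabs : |z| ≤ m := by
    rw [hz, abs_div, abs_mul, abs_of_pos hlam_pos, Nat.abs_cast, div_le_iff₀ hlam_pos]
    have : |t0| ≤ lam := abs_le.mpr ⟨ht0l, ht0u⟩
    nlinarith
  refine ⟨round z, ?_, ?_⟩
  · rw [abs_le]
    have hz1 := (abs_le.mp hzabs).1
    have hz2 := (abs_le.mp hzabs).2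
    constructor
    · rw [round_eq, Int.le_floor]
      push_cast
      linarith
    · rw [round_eq, Int.floor_le_iff]
      push_cast
      linarith
  · -- sup norm bound
    have hround : |z - (round z : ℝ)| ≤ 1/2 := abs_sub_round z
    have htk : |t0 - (round z : ℝ) * lam / m| ≤ lam / m * (1/2) := by
      have : t0 - (round z : ℝ) * lam / m = (z - round z) * (lam / m) := by
        rw [hz]; field_simp
      rw [this, abs_mul, abs_of_pos (div_pos hlam_pos hmR)]
      calc |z - (round z:ℝ)| * (lam/m) ≤ (1/2) * (lam/m) :=
            mul_le_mul_of_nonneg_right hround (le_of_lt (div_pos hlam_pos hmR))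
      _ = lam / m * (1/2) := by ring
    have hfinal : ∀ j, |x j - (round z : ℝ) * lam / m| ≤ lam + lam / m * (1/2) := by
      intro j
      calc |x j - (round z : ℝ) * lam / m| ≤ |x j - t0| + |t0 - (round z : ℝ) * lam / m| := by
            exact abs_sub_le _ t0 _
      _ ≤ lam + lam / m * (1/2) := add_le_add (hclose j) htk
    have hB : lam + lam / m * (1/2) < ρ := by
      have h1 : lam / m * (1/2) < lam / m := by
        have := div_pos hlam_pos hmR
        linarith
      linarith
    rw [seqSupNorm]
    have hle : (⨆ j, (‖x j - (round z : ℝ) * lam / m‖₊ : ℝ≥0∞)) ≤ ENNReal.ofReal (lam + lam / m * (1/2)) := by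
      apply iSup_le
      intro j
      rw [← enorm_eq_nnnorm, Real.enorm_eq_ofReal_abs]
      exact ENNReal.ofReal_le_ofReal (hfinal j)
    calc (⨆ j, (‖x j - (round z : ℝ) * lam / m‖₊ : ℝ≥0∞)) ≤ ENNReal.ofReal (lam + lam / m * (1/2)) := hle
    _ < ENNReal.ofReal ρ := by
      rw [ENNReal.ofReal_lt_ofReal_iff (by linarith [hlam_pos])]
      exact hB
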